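/- Let k ≥ 2 and (∧V, d) a Sullivan algebra with dim V < ∞. On the algebra ∧V ⊗ ∧s^{k-1}V ⊗ ∧s^kV define the derivation d of degree 1 by d(v) = dv, d(s^{k-1}v) = (−1)^{k-1}s^{(k-1)}(dv), and d(s^kv) = s^{k-1}v + (−1)^k s^{(k)}(dv), where s^{(k)} is the derivation sending v ↦ s^kv and s^{k-1}v, s^kv ↦ 0. Then d ∘ d = 0, and the map ε̃ to ∧V given by v ↦ v, s^{k-1}v ↦ 0, s^kv ↦ 0 is a quasi-isomorphism of dgas. -/

import Mathlib

noncomputable section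
namespace Brane
set_option linter.unusedSectionVars false
set_option linter.unnecessarySimpa false
set_option linter.unnecessarySeqFocus false
set_option maxHeartbeats 4000000


/-- The monomial in a generator family indexed by a list. -/
def mon {A G : Type} [Ring A] (gen : G → A) (l : List G) : A := (l.map gen).prod

/-- The degree-`m` component: the `K`-span of monomials of total degree `m`. -/
def grading (K : Type) {A G : Type} [Field K] [Ring A] [Algebra K A]
    (gen : G → A) (dg : G → ℤ) (m : ℤ) : Submodule K A :=
  Submodule.span K {a : A | ∃ l : List G, (l.map dg).sum = m ∧ a = mon gen l}

/-- Graded commutativity on generators (Koszul signs). -/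
def GradedComm (K : Type) {A G : Type} [Field K] [Ring A] [Algebra K A]
    (gen : G → A) (dg : G → ℤ) : Prop :=
  ∀ i j, gen i * gen j = ((-1 : K) ^ (dg i * dg j)) • (gen j * gen i)

/-- `A` is the free graded-commutative algebra on the generators: the reduced sorted
monomials (odd generators appearing at most once) form a `K`-basis. -/
def IsFreeGCAOn (K : Type) {A G : Type} [Field K] [Ring A] [Algebra K A] [LinearOrder G]
    (gen : G → A) (dg : G → ℤ) : Prop :=
  ∃ b : Module.Basis {l : List G // l.Pairwise (· ≤ ·) ∧ ∀ g, Odd (dg g) → l.count g ≤ 1} K A,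
    ∀ l, b l = mon gen l.1

/-- A graded `K`-linear derivation of degree `r` (Koszul sign rule). -/
def IsGradedDer (K : Type) {A G : Type} [Field K] [Ring A] [Algebra K A]
    (gen : G → A) (dg : G → ℤ) (r : ℤ) (D : A →ₗ[K] A) : Prop :=
  (∀ (i : ℤ) (a : A), a ∈ grading K gen dg i → D a ∈ grading K gen dg (i + r)) ∧
  (∀ (i : ℤ) (a b : A), a ∈ grading K gen dg i →
    D (a * b) = D a * b + ((-1 : K) ^ (r * i)) • (a * D b))

/-- A differential: a graded derivation of degree `1` squaring to zero. -/
def IsDifferential (K : Type) {A G : Type} [Field K] [Ring A] [Algebra K A]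
    (gen : G → A) (dg : G → ℤ) (D : A →ₗ[K] A) : Prop :=
  IsGradedDer K gen dg 1 D ∧ ∀ a, D (D a) = 0

/-- The Sullivan (nilpotence) condition. -/
def SullivanCond (K : Type) {A G : Type} [Field K] [Ring A] [Algebra K A]
    (gen : G → A) (D : A →ₗ[K] A) : Prop :=
  ∃ w : G → ℕ, ∀ g, D (gen g) ∈ Algebra.adjoin K (gen '' {g' | w g' < w g})

/-- Decomposable elements (span of monomials of length at least two). -/
def decomposables (K : Type) {A G : Type} [Field K] [Ring A] [Algebra K A]
    (gen : G → A) : Submodule K A :=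
  Submodule.span K {a : A | ∃ l : List G, 2 ≤ l.length ∧ a = mon gen l}


section Generic
variable {K A G : Type} [Field K] [CharZero K] [Ring A] [Algebra K A]

lemma mon_nil (gen : G → A) : mon gen ([] : List G) = 1 := rfl

lemma mon_cons (gen : G → A) (g : G) (l : List G) :
    mon gen (g :: l) = gen g * mon gen l := by simp [mon]

lemma mon_single (gen : G → A) (g : G) : mon gen [g] = gen g := by simp [mon]

lemma mon_append (gen : G → A) (l₁ l₂ : List G) :
    mon gen (l₁ ++ l₂) = mon gen l₁ * mon gen l₂ := by simp [mon]

lemma mon_mem_grading (gen : G → A) (dg : G → ℤ) (l : List G) :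
    mon gen l ∈ grading K gen dg ((l.map dg).sum) :=
  Submodule.subset_span ⟨l, rfl, rfl⟩

lemma grading_cast {gen : G → A} {dg : G → ℤ} {i j : ℤ} (h : i = j) {x : A}
    (hx : x ∈ grading K gen dg i) : x ∈ grading K gen dg j := h ▸ hx

lemma gen_mem_grading (gen : G → A) (dg : G → ℤ) (g : G) :
    gen g ∈ grading K gen dg (dg g) := by
  have := mon_mem_grading (K := K) gen dg [g]
  simpa [mon_single] using this

lemma one_mem_grading (gen : G → A) (dg : G → ℤ) : (1:A) ∈ grading K gen dg 0 :=
  mon_mem_grading gen dg []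

-- sign lemmas
lemma s_ne : (-1:K) ≠ 0 := by norm_num

lemma s_mul (m n : ℤ) : ((-1:K)^m) * ((-1:K)^n) = (-1:K)^(m+n) :=
  (zpow_add₀ s_ne m n).symm

lemma s_parity {m n : ℤ} (h : Even (m - n)) : ((-1:K)^m) = (-1:K)^n := by
  obtain ⟨c, hc⟩ := h
  have hm : m = n + (c + c) := by omega
  rw [hm, zpow_add₀ (s_ne (K := K)), zpow_add₀ (s_ne (K := K))]
  rcases Int.even_or_odd c with hcc | hcc
  · rw [hcc.neg_one_zpow]; ring
  · rw [hcc.neg_one_zpow]; ring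

lemma s_sq (m : ℤ) : ((-1:K)^m) * ((-1:K)^m) = 1 := by
  rw [s_mul]
  exact Even.neg_one_zpow ⟨m, rfl⟩

-- grading multiplication
lemma mon_mul_grading {gen : G → A} {dg : G → ℤ} (l : List G) {jj : ℤ} {y : A}
    (hy : y ∈ grading K gen dg jj) :
    mon gen l * y ∈ grading K gen dg ((l.map dg).sum + jj) := by
  induction hy using Submodule.span_induction with
  | mem x hx =>
    obtain ⟨l', hs, rfl⟩ := hx
    rw [← mon_append]
    exact grading_cast (by subst hs; simp) (mon_mem_grading gen dg (l ++ l'))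
  | zero => simpa using Submodule.zero_mem _
  | add x y hx hy hx' hy' => rw [mul_add]; exact Submodule.add_mem _ hx' hy'
  | smul a x hx hx' => rw [mul_smul_comm]; exact Submodule.smul_mem _ _ hx'

lemma grading_mul {gen : G → A} {dg : G → ℤ} {i j : ℤ} {x y : A}
    (hx : x ∈ grading K gen dg i) (hy : y ∈ grading K gen dg j) :
    x * y ∈ grading K gen dg (i + j) := by
  induction hx using Submodule.span_induction with
  | mem x hx =>
    obtain ⟨l, hs, rfl⟩ := hx
    exact grading_cast (by rw [hs]) (mon_mul_grading l hy)
  | zero => simpa using Submodule.zero_mem _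
  | add x y hx hy hx' hy' => rw [add_mul]; exact Submodule.add_mem _ hx' hy'
  | smul a x hx hx' => rw [smul_mul_assoc]; exact Submodule.smul_mem _ _ hx'

-- basis helpers
variable {gen : G → A} {dg : G → ℤ}

lemma odd_sq (hcomm : GradedComm K gen dg) {g : G} (h : Odd (dg g)) :
    gen g * gen g = 0 := by
  have h1 := hcomm g g
  rw [Odd.neg_one_zpow (h.mul h)] at h1
  have h2 : (2:K) • (gen g * gen g) = 0 := by
    rw [two_smul]
    nth_rewrite 1 [h1]
    simp
  have := smul_eq_zero.mp h2
  simpa using this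

end Generic

section Lists

variable {G : Type} [LinearOrder G]

def invc : List G → ℕ
  | [] => 0
  | a :: t => t.countP (fun x => decide (x < a)) + invc t

lemma invc_swap (u : List G) (v : List G) (a c : G) (h : c < a) :
    invc (u ++ a :: c :: v) = invc (u ++ c :: a :: v) + 1 := by
  induction u with
  | nil =>
    simp only [List.nil_append, invc, List.countP_cons]
    have h1 : decide (c < a) = true := by simpa using h
    have h2 : decide (a < c) = false := by simpa using not_lt.mpr h.le
    rw [h1, h2]
    simp
    omega
  | cons x u ih =>
    have hp : (u ++ a :: c :: v).Perm (u ++ c :: a :: v) :=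
      List.Perm.append_left u (List.Perm.swap c a v)
    simp only [List.cons_append, invc, List.append_eq]
    rw [hp.countP_eq]
    omega

lemma exists_descent : ∀ (l : List G), ¬ l.IsChain (· ≤ ·) →
    ∃ u a c v, l = u ++ a :: c :: v ∧ c < a := by
  intro l
  induction l with
  | nil => intro h; exact absurd List.isChain_nil h
  | cons x t ih =>
    intro h
    cases t with
    | nil => exact absurd (List.isChain_singleton x) h
    | cons y t' =>
      by_cases hxy : x ≤ y
      · have hnc : ¬ (y :: t').IsChain (· ≤ ·) := by
          intro hc
          exact h (List.isChain_cons_cons.mpr ⟨hxy, hc⟩)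
        obtain ⟨u, a, c, v, heq, hlt⟩ := ih hnc
        exact ⟨x :: u, a, c, v, by rw [heq]; simp, hlt⟩
      · exact ⟨[], x, y, t', rfl, not_le.mp hxy⟩

lemma not_sorted_descent (l : List G) (h : ¬ l.Pairwise (· ≤ ·)) :
    ∃ u a c v, l = u ++ a :: c :: v ∧ c < a := by
  apply exists_descent
  intro hc
  exact h (List.isChain_iff_pairwise.mp hc)

lemma sorted_dup : ∀ (l : List G), l.Pairwise (· ≤ ·) → ∀ g, 2 ≤ l.count g →
    ∃ u v, l = u ++ g :: g :: v := by
  intro l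
  induction l with
  | nil => intro _ g hg; simp at hg
  | cons x t ih =>
    intro hs g hc
    have hx : ∀ y ∈ t, x ≤ y := (List.pairwise_cons.mp hs).1
    have ht : t.Pairwise (· ≤ ·) := (List.pairwise_cons.mp hs).2
    by_cases hxg : x = g
    · subst hxg
      have hmem : x ∈ t := by
        have : 0 < t.count x := by
          rw [List.count_cons_self] at hc; omega
        exact List.count_pos_iff.mp this
      cases t with
      | nil => simp at hmem
      | cons y t' =>
        have h1 : x ≤ y := hx y (by simp)
        have h2 : y ≤ x := by
          rcases List.mem_cons.mp hmem with h | h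
          · exact le_of_eq h.symm
          · exact (List.pairwise_cons.mp ht).1 x h
        have : y = x := le_antisymm h2 h1
        subst this
        exact ⟨[], t', by simp⟩
    · have hct : 2 ≤ t.count g := by
        rwa [List.count_cons_of_ne hxg] at hc
      obtain ⟨u, v, rfl⟩ := ih ht g hct
      exact ⟨x :: u, v, by simp⟩

end Lists

section Tlist
variable {K A G : Type} [Field K] [CharZero K] [Ring A] [Algebra K A]

def tlist (K : Type) {A G : Type} [Field K] [Ring A] [Algebra K A]
    (gen tgen : G → A) (dg : G → ℤ) : List G → A
  | [] => 0
  | g :: t => tgen g * mon gen t + ((-1:K) ^ (dg g)) • (gen g * tlist K gen tgen dg t)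

variable {gen tgen : G → A} {dg : G → ℤ}

lemma tlist_nil : tlist K gen tgen dg [] = 0 := rfl

lemma tlist_cons (g : G) (t : List G) : tlist K gen tgen dg (g :: t) =
    tgen g * mon gen t + ((-1:K) ^ (dg g)) • (gen g * tlist K gen tgen dg t) := rfl

lemma tlist_append (u w : List G) :
    tlist K gen tgen dg (u ++ w) = tlist K gen tgen dg u * mon gen w
      + ((-1:K) ^ ((u.map dg).sum)) • (mon gen u * tlist K gen tgen dg w) := by
  induction u with
  | nil => simp [tlist_nil, mon_nil]
  | cons g u ih =>
    rw [List.cons_append, tlist_cons, mon_append, ih, tlist_cons]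
    simp only [List.map_cons, List.sum_cons, mon_cons]
    rw [zpow_add₀ (s_ne (K := K))]
    simp only [mul_add, smul_add, add_mul, smul_mul_assoc, mul_smul_comm, smul_smul, mul_assoc]
    match_scalars <;> ring

lemma mon_swap2 (hcomm : GradedComm K gen dg) (a c : G) (v : List G) :
    mon gen (a :: c :: v) = ((-1:K) ^ (dg a * dg c)) • mon gen (c :: a :: v) := by
  rw [mon_cons, mon_cons, mon_cons, mon_cons, ← mul_assoc, hcomm a c]
  simp [smul_mul_assoc, mul_assoc]

lemma mon_swap (hcomm : GradedComm K gen dg) (u v : List G) (a c : G) :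
    mon gen (u ++ a :: c :: v) = ((-1:K) ^ (dg a * dg c)) • mon gen (u ++ c :: a :: v) := by
  rw [mon_append, mon_append, mon_swap2 hcomm, mul_smul_comm]

lemma mon_dup2 (hcomm : GradedComm K gen dg) {g : G} (h : Odd (dg g)) (v : List G) :
    mon gen (g :: g :: v) = 0 := by
  rw [mon_cons, mon_cons, ← mul_assoc, odd_sq hcomm h, zero_mul]

lemma mon_dup (hcomm : GradedComm K gen dg) (u v : List G) {g : G} (h : Odd (dg g)) :
    mon gen (u ++ g :: g :: v) = 0 := by
  rw [mon_append, mon_dup2 hcomm h, mul_zero]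

variable (htc : ∀ i j, tgen i * gen j = ((-1 : K) ^ ((dg i - 1) * dg j)) • (gen j * tgen i))

include htc in
lemma tlist_swap2 (hcomm : GradedComm K gen dg) (a c : G) (v : List G) :
    tlist K gen tgen dg (a :: c :: v) = ((-1:K) ^ (dg a * dg c)) • tlist K gen tgen dg (c :: a :: v) := by
  have h1 : tgen a * (gen c * mon gen v)
      = ((-1:K) ^ ((dg a - 1) * dg c)) • (gen c * (tgen a * mon gen v)) := by
    rw [← mul_assoc, htc a c, smul_mul_assoc, mul_assoc]
  have h2 : tgen c * (gen a * mon gen v)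
      = ((-1:K) ^ ((dg c - 1) * dg a)) • (gen a * (tgen c * mon gen v)) := by
    rw [← mul_assoc, htc c a, smul_mul_assoc, mul_assoc]
  have h3 : gen a * (gen c * tlist K gen tgen dg v)
      = ((-1:K) ^ (dg a * dg c)) • (gen c * (gen a * tlist K gen tgen dg v)) := by
    rw [← mul_assoc, hcomm a c, smul_mul_assoc, mul_assoc]
  rw [tlist_cons, tlist_cons, tlist_cons, tlist_cons, mon_cons, mon_cons]
  rw [h1, h2]
  simp only [mul_add, smul_add, mul_smul_comm, smul_smul]
  rw [h3]
  match_scalars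
  · rw [mul_one, mul_one, s_mul]
    exact s_parity ⟨-(dg c), by ring⟩
  · rw [mul_one, mul_one, s_mul]
    exact s_parity ⟨dg a - dg a * dg c, by ring⟩
  · rw [mul_one, mul_one, s_mul, s_mul, s_mul, s_mul]
    exact s_parity ⟨0, by ring⟩

include htc in
lemma tlist_swap (hcomm : GradedComm K gen dg) (u v : List G) (a c : G) :
    tlist K gen tgen dg (u ++ a :: c :: v)
      = ((-1:K) ^ (dg a * dg c)) • tlist K gen tgen dg (u ++ c :: a :: v) := by
  rw [tlist_append, tlist_append, tlist_swap2 htc hcomm, mon_swap2 hcomm]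
  simp only [smul_add, mul_smul_comm, smul_smul, smul_mul_assoc]
  match_scalars <;> ring

include htc in
lemma tlist_dup2 (hcomm : GradedComm K gen dg) {g : G} (h : Odd (dg g)) (v : List G) :
    tlist K gen tgen dg (g :: g :: v) = 0 := by
  have h1 : tgen g * (gen g * mon gen v)
      = ((-1:K) ^ ((dg g - 1) * dg g)) • (gen g * (tgen g * mon gen v)) := by
    rw [← mul_assoc, htc g g, smul_mul_assoc, mul_assoc]
  have he : ((-1:K) ^ ((dg g - 1) * dg g)) = 1 := by
    have h0 : Even ((dg g - 1) * dg g) := by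
      rw [show (dg g - 1) * dg g = (dg g - 1) * ((dg g - 1) + 1) by ring]
      exact Int.even_mul_succ_self (dg g - 1)
    have : ((-1:K) ^ ((dg g - 1) * dg g)) = (-1:K) ^ (0:ℤ) := s_parity (by simpa using h0)
    simpa using this
  have h2 : gen g * (gen g * tlist K gen tgen dg v) = 0 := by
    rw [← mul_assoc, odd_sq hcomm h, zero_mul]
  rw [tlist_cons, tlist_cons, mon_cons, Odd.neg_one_zpow h]
  rw [h1, he, one_smul]
  simp only [mul_add, smul_add, mul_smul_comm, h2, Odd.neg_one_zpow h]
  match_scalars <;> ring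

include htc in
lemma tlist_dup (hcomm : GradedComm K gen dg) (u v : List G) {g : G} (h : Odd (dg g)) :
    tlist K gen tgen dg (u ++ g :: g :: v) = 0 := by
  rw [tlist_append, tlist_dup2 htc hcomm h, mon_dup2 hcomm h]
  simp

lemma tlist_mem_grading (htm : ∀ g, tgen g ∈ grading K gen dg (dg g - 1)) (l : List G) :
    tlist K gen tgen dg l ∈ grading K gen dg ((l.map dg).sum - 1) := by
  induction l with
  | nil => exact zero_mem _
  | cons g t ih =>
    rw [tlist_cons]
    refine add_mem (grading_cast (by rw [List.map_cons, List.sum_cons]; ring) (grading_mul (htm g) (mon_mem_grading gen dg t)))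
      (Submodule.smul_mem _ _ (grading_cast (by rw [List.map_cons, List.sum_cons]; ring) (grading_mul (gen_mem_grading gen dg g) ih)))

end Tlist

section FreeSec
variable {K A G : Type} [Field K] [CharZero K] [Ring A] [Algebra K A] [LinearOrder G]
variable {gen tgen : G → A} {dg : G → ℤ}

def gradingB (K : Type) {A G : Type} [Field K] [Ring A] [Algebra K A] [LinearOrder G]
    (gen : G → A) (dg : G → ℤ) (n : ℤ) : Submodule K A :=
  Submodule.span K {x : A | ∃ l : List G, l.Pairwise (· ≤ ·) ∧ (∀ g, Odd (dg g) → l.count g ≤ 1)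
    ∧ (l.map dg).sum = n ∧ x = mon gen l}

variable (b : Module.Basis {l : List G // l.Pairwise (· ≤ ·) ∧ ∀ g, Odd (dg g) → l.count g ≤ 1} K A)

lemma span_mon (hb : ∀ l, b l = mon gen l.1) (p : Submodule K A)
    (h : ∀ l : List G, mon gen l ∈ p) (z : A) : z ∈ p := by
  have hz : z ∈ Submodule.span K (Set.range b) := by rw [b.span_eq]; trivial
  refine Submodule.span_le.mpr ?_ hz
  rintro _ ⟨l, rfl⟩
  rw [hb]; exact h l.1

lemma lin_ext {A' : Type} [AddCommGroup A'] [Module K A'] (hb : ∀ l, b l = mon gen l.1)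
    {f g : A →ₗ[K] A'} (h : ∀ l : List G, f (mon gen l) = g (mon gen l)) (z : A) : f z = g z := by
  have : z ∈ LinearMap.ker (f - g) := by
    refine span_mon b hb _ (fun l => ?_) z
    simp [LinearMap.mem_ker, LinearMap.sub_apply, h l]
  simpa [LinearMap.mem_ker, LinearMap.sub_apply, sub_eq_zero] using this

lemma key_lemma (hcomm : GradedComm K gen dg)
    (htc : ∀ i j, tgen i * gen j = ((-1 : K) ^ ((dg i - 1) * dg j)) • (gen j * tgen i))
    (hb : ∀ l, b l = mon gen l.1) :
    ∀ l : List G, ((b.constr K fun s => tlist K gen tgen dg s.1) (mon gen l)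
        = tlist K gen tgen dg l)
      ∧ mon gen l ∈ gradingB K gen dg ((l.map dg).sum) := by
  have sortedCase : ∀ l : List G, l.Pairwise (· ≤ ·) →
      ((b.constr K fun s => tlist K gen tgen dg s.1) (mon gen l) = tlist K gen tgen dg l)
      ∧ mon gen l ∈ gradingB K gen dg ((l.map dg).sum) := by
    intro l hs
    by_cases hr : ∀ g, Odd (dg g) → l.count g ≤ 1
    · have hbl : mon gen l = b ⟨l, hs, hr⟩ := (hb ⟨l, hs, hr⟩).symm
      constructor
      · rw [hbl, Module.Basis.constr_basis]
      · exact Submodule.subset_span ⟨l, hs, hr, rfl, rfl⟩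
    · push_neg at hr
      obtain ⟨g, hodd, hcnt⟩ := hr
      obtain ⟨u, v, rfl⟩ := sorted_dup l hs g (by omega)
      constructor
      · rw [mon_dup hcomm _ _ hodd, map_zero, tlist_dup htc hcomm _ _ hodd]
      · rw [mon_dup hcomm _ _ hodd]; exact zero_mem _
  suffices H : ∀ N (l : List G), invc l ≤ N →
      ((b.constr K fun s => tlist K gen tgen dg s.1) (mon gen l) = tlist K gen tgen dg l)
      ∧ mon gen l ∈ gradingB K gen dg ((l.map dg).sum) from
    fun l => H (invc l) l le_rfl
  intro N
  induction N with
  | zero =>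
    intro l hl
    by_cases hs : l.Pairwise (· ≤ ·)
    · exact sortedCase l hs
    · exfalso
      obtain ⟨u, a, c, v, rfl, hlt⟩ := not_sorted_descent l hs
      have := invc_swap u v a c hlt
      omega
  | succ N ih =>
    intro l hl
    by_cases hs : l.Pairwise (· ≤ ·)
    · exact sortedCase l hs
    · obtain ⟨u, a, c, v, rfl, hlt⟩ := not_sorted_descent l hs
      have hsw := invc_swap u v a c hlt
      have h1 := ih (u ++ c :: a :: v) (by omega)
      have hdeg : (((u ++ c :: a :: v)).map dg).sum = (((u ++ a :: c :: v)).map dg).sum := by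
        simp; ring
      constructor
      · rw [mon_swap hcomm, map_smul, h1.1, ← tlist_swap htc hcomm]
      · rw [mon_swap hcomm]
        exact Submodule.smul_mem _ _ (hdeg ▸ h1.2)

lemma theta_mon (hcomm : GradedComm K gen dg)
    (htc : ∀ i j, tgen i * gen j = ((-1 : K) ^ ((dg i - 1) * dg j)) • (gen j * tgen i))
    (hb : ∀ l, b l = mon gen l.1) (l : List G) :
    (b.constr K fun s => tlist K gen tgen dg s.1) (mon gen l) = tlist K gen tgen dg l :=
  (key_lemma b hcomm htc hb l).1

lemma grading_le_gradingB (hcomm : GradedComm K gen dg)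
    (htc : ∀ i j, tgen i * gen j = ((-1 : K) ^ ((dg i - 1) * dg j)) • (gen j * tgen i))
    (hb : ∀ l, b l = mon gen l.1) (n : ℤ) :
    grading K gen dg n ≤ gradingB K gen dg n := by
  refine Submodule.span_le.mpr ?_
  rintro x ⟨l, hsum, rfl⟩
  exact hsum ▸ (key_lemma b hcomm htc hb l).2

lemma theta_mul (hcomm : GradedComm K gen dg)
    (htc : ∀ i j, tgen i * gen j = ((-1 : K) ^ ((dg i - 1) * dg j)) • (gen j * tgen i))
    (hb : ∀ l, b l = mon gen l.1) {i : ℤ} {x : A} (hx : x ∈ grading K gen dg i) (y : A) :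
    (b.constr K fun s => tlist K gen tgen dg s.1) (x * y)
      = (b.constr K fun s => tlist K gen tgen dg s.1) x * y
        + ((-1:K) ^ i) • (x * (b.constr K fun s => tlist K gen tgen dg s.1) y) := by
  set T := (b.constr K fun s => tlist K gen tgen dg s.1) with hT
  induction hx using Submodule.span_induction with
  | mem x hx =>
    obtain ⟨lx, hsum, rfl⟩ := hx
    subst hsum
    have := lin_ext b hb
      (f := T ∘ₗ LinearMap.mulLeft K (mon gen lx))
      (g := LinearMap.mulLeft K (T (mon gen lx))
        + ((-1:K) ^ ((lx.map dg).sum)) • ((LinearMap.mulLeft K (mon gen lx)) ∘ₗ T))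
      (fun ly => by
        simp only [LinearMap.comp_apply, LinearMap.mulLeft_apply, LinearMap.add_apply,
          LinearMap.smul_apply]
        rw [← mon_append, theta_mon b hcomm htc hb, theta_mon b hcomm htc hb,
          theta_mon b hcomm htc hb, tlist_append]) y
    simpa only [LinearMap.comp_apply, LinearMap.mulLeft_apply, LinearMap.add_apply,
      LinearMap.smul_apply] using this
  | zero => simp
  | add x₁ x₂ hx₁ hx₂ ih₁ ih₂ =>
    rw [add_mul, map_add, ih₁, ih₂, map_add, add_mul, add_mul]
    simp only [smul_add]
    abel
  | smul a x hx ih =>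
    rw [smul_mul_assoc, map_smul, ih, map_smul, smul_mul_assoc]
    simp only [smul_add, smul_smul, smul_mul_assoc]
    rw [mul_comm a ((-1:K) ^ i)]

lemma theta_grading (hcomm : GradedComm K gen dg)
    (htc : ∀ i j, tgen i * gen j = ((-1 : K) ^ ((dg i - 1) * dg j)) • (gen j * tgen i))
    (htm : ∀ g, tgen g ∈ grading K gen dg (dg g - 1))
    (hb : ∀ l, b l = mon gen l.1) {n : ℤ} {x : A} (hx : x ∈ grading K gen dg n) :
    (b.constr K fun s => tlist K gen tgen dg s.1) x ∈ grading K gen dg (n - 1) := by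
  induction hx using Submodule.span_induction with
  | mem x hx =>
    obtain ⟨l, hsum, rfl⟩ := hx
    rw [theta_mon b hcomm htc hb]
    exact grading_cast (by omega) (tlist_mem_grading htm l)
  | zero => rw [map_zero]; exact zero_mem _
  | add x y hx hy ihx ihy => rw [map_add]; exact add_mem ihx ihy
  | smul a x hx ihx => rw [map_smul]; exact Submodule.smul_mem _ _ ihx

end FreeSec

section DerOne
variable {K A G : Type} [Field K] [CharZero K] [Ring A] [Algebra K A]
variable {gen : G → A} {dg : G → ℤ}

lemma der_one {D : A →ₗ[K] A} {r : ℤ} (hD : IsGradedDer K gen dg r D) : D 1 = 0 := by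
  have h := hD.2 0 1 1 (one_mem_grading gen dg)
  simp only [mul_one, mul_zero, zpow_zero, one_smul, one_mul] at h
  exact (left_eq_add.mp h)

end DerOne

/-- Let `k ≥ 2` and `(∧V, d)` a Sullivan algebra with `dim V < ∞`.
On `∧V ⊗ ∧s^{k-1}V ⊗ ∧s^kV` define the degree `1` derivation `d` by `d(v) = dv`,
`d(s^{k-1}v) = (−1)^{k-1}s^{(k-1)}(dv)`, `d(s^kv) = s^{k-1}v + (−1)^k s^{(k)}(dv)`.
Then `d ∘ d = 0`, and the map `ε̃ : ∧V ⊗ ∧s^{k-1}V ⊗ ∧s^kV → ∧V`, `v ↦ v`,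
`s^{k-1}v ↦ 0`, `s^kv ↦ 0`, is a quasi-isomorphism of dgas. -/
theorem disk_model_differential_and_quasiIso
    (K A DA G : Type) [Field K] [CharZero K] [Ring A] [Algebra K A] [Ring DA] [Algebra K DA]
    [Fintype G] [LinearOrder G] [LinearOrder (G ⊕ G ⊕ G)] (k : ℕ) (hk : 2 ≤ k)
    -- the Sullivan algebra (∧V, d)
    (gen : G → A) (dg : G → ℤ) (hpos : ∀ g, 1 ≤ dg g)
    (hfree : IsFreeGCAOn K gen dg) (hcomm : GradedComm K gen dg)
    (dA : A →ₗ[K] A) (hdA : IsDifferential K gen dg dA) (hS : SullivanCond K gen dA)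
    -- the free graded-commutative algebra ∧V ⊗ ∧s^{k-1}V ⊗ ∧s^kV
    (dgen : G ⊕ G ⊕ G → DA) (ddg : G ⊕ G ⊕ G → ℤ)
    (hddg : ∀ g, ddg (Sum.inl g) = dg g ∧ ddg (Sum.inr (Sum.inl g)) = dg g - (k - 1) ∧
      ddg (Sum.inr (Sum.inr g)) = dg g - k)
    (hDfree : IsFreeGCAOn K dgen ddg) (hDcomm : GradedComm K dgen ddg)
    (j : A →ₐ[K] DA) (hj : ∀ g, j (gen g) = dgen (Sum.inl g))
    -- the derivation s^{(k-1)}: v ↦ s^{k-1}v, other generators ↦ 0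
    (sk1 : DA →ₗ[K] DA) (hsk1 : IsGradedDer K dgen ddg (-(k - 1 : ℤ)) sk1)
    (hsk1a : ∀ g, sk1 (dgen (Sum.inl g)) = dgen (Sum.inr (Sum.inl g)))
    (hsk1b : ∀ g, sk1 (dgen (Sum.inr (Sum.inl g))) = 0)
    (hsk1c : ∀ g, sk1 (dgen (Sum.inr (Sum.inr g))) = 0)
    -- the derivation s^{(k)}: v ↦ s^kv, other generators ↦ 0
    (sk : DA →ₗ[K] DA) (hsk : IsGradedDer K dgen ddg (-(k : ℤ)) sk)
    (hska : ∀ g, sk (dgen (Sum.inl g)) = dgen (Sum.inr (Sum.inr g)))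
    (hskb : ∀ g, sk (dgen (Sum.inr (Sum.inl g))) = 0)
    (hskc : ∀ g, sk (dgen (Sum.inr (Sum.inr g))) = 0)
    -- the differential D on the disk model, and the augmentation ε̃
    (D : DA →ₗ[K] DA) (hDder : IsGradedDer K dgen ddg 1 D)
    (hD1 : ∀ a : A, D (j a) = j (dA a))
    (hD2 : ∀ g, D (dgen (Sum.inr (Sum.inl g))) = ((-1 : K) ^ (k - 1)) • sk1 (j (dA (gen g))))
    (hD3 : ∀ g, D (dgen (Sum.inr (Sum.inr g))) =
      dgen (Sum.inr (Sum.inl g)) + ((-1 : K) ^ k) • sk (j (dA (gen g))))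
    (e : DA →ₐ[K] A) (he1 : ∀ g, e (dgen (Sum.inl g)) = gen g)
    (he2 : ∀ g, e (dgen (Sum.inr (Sum.inl g))) = 0)
    (he3 : ∀ g, e (dgen (Sum.inr (Sum.inr g))) = 0) :
    -- d ∘ d = 0, ε̃ is a chain map, and ε̃ is a quasi-isomorphism
    (∀ z, D (D z) = 0) ∧
    (∀ z, dA (e z) = e (D z)) ∧
    (∀ (n : ℤ) (a : A), a ∈ grading K gen dg n → dA a = 0 →
      ∃ z ∈ grading K dgen ddg n, D z = 0 ∧ ∃ b ∈ grading K gen dg (n - 1), e z - a = dA b) ∧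
    (∀ (n : ℤ) (z : DA), z ∈ grading K dgen ddg n → D z = 0 →
      (∃ b ∈ grading K gen dg (n - 1), e z = dA b) →
      ∃ w ∈ grading K dgen ddg (n - 1), D w = z) := by
  classical
  obtain ⟨bA, hbA⟩ := hfree
  obtain ⟨bD, hbD⟩ := hDfree
  have hkcast : ((k - 1 : ℕ) : ℤ) = (k:ℤ) - 1 := by omega
  have hsn1 : ((-1:K) ^ (k - 1 : ℕ)) = (-1:K) ^ ((k:ℤ) - 1) := by rw [← zpow_natCast, hkcast]
  have hsn2 : ((-1:K) ^ (k : ℕ)) = (-1:K) ^ ((k:ℤ)) := (zpow_natCast _ _).symm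
  -- memberships
  have hv : ∀ g : G, dgen (Sum.inl g) ∈ grading K dgen ddg (dg g) :=
    fun g => grading_cast (hddg g).1 (gen_mem_grading dgen ddg _)
  have hva : ∀ g : G, gen g ∈ grading K gen dg (dg g) := gen_mem_grading gen dg
  have hdAv : ∀ g : G, dA (gen g) ∈ grading K gen dg (dg g + 1) := by
    intro g
    have := hdA.1.1 (dg g) (gen g) (hva g)
    simpa using this
  -- j of monomials
  have jmon : ∀ l : List G, j (mon gen l) = mon dgen (l.map Sum.inl) := by
    intro l
    induction l with
    | nil => simp [mon_nil]
    | cons g t ih => rw [mon_cons, map_mul, hj, ih, List.map_cons, mon_cons]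
  have degmap : ∀ l : List G, ((l.map Sum.inl).map ddg).sum = (l.map dg).sum := by
    intro l
    induction l with
    | nil => simp
    | cons g t ih =>
      rw [List.map_cons, List.map_cons, List.sum_cons, ih, (hddg g).1, List.map_cons,
        List.sum_cons]
  have j_grading : ∀ (n : ℤ) (a : A), a ∈ grading K gen dg n → j a ∈ grading K dgen ddg n := by
    intro n a ha
    induction ha using Submodule.span_induction with
    | mem x hx =>
      obtain ⟨l, hsum, rfl⟩ := hx
      rw [jmon]
      exact grading_cast (by rw [degmap, hsum]) (mon_mem_grading dgen ddg _)
    | zero => rw [map_zero]; exact zero_mem _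
    | add x y hx hy ihx ihy => rw [map_add]; exact add_mem ihx ihy
    | smul a x hx ihx => rw [map_smul]; exact Submodule.smul_mem _ _ ihx
  have hjdAv : ∀ g : G, j (dA (gen g)) ∈ grading K dgen ddg (dg g + 1) :=
    fun g => j_grading _ _ (hdAv g)
  -- e ∘ j = id
  have ej : ∀ a : A, e (j a) = a := by
    have hmono : ∀ l : List G, e (j (mon gen l)) = mon gen l := by
      intro l
      induction l with
      | nil => simp [mon_nil]
      | cons g t ih => rw [mon_cons, map_mul, map_mul, hj, he1, ih]
    intro a
    have := lin_ext bA hbA (f := e.toLinearMap ∘ₗ j.toLinearMap) (g := LinearMap.id)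
      (fun l => by simpa using hmono l) a
    simpa using this
  have jinj : ∀ a : A, j a = 0 → a = 0 := by
    intro a ha
    have := ej a
    rw [ha, map_zero] at this
    exact this.symm
  -- e maps gradings to gradings
  have e_mon : ∀ l : List (G ⊕ G ⊕ G), e (mon dgen l) ∈ grading K gen dg ((l.map ddg).sum) := by
    intro l
    induction l with
    | nil =>
      rw [mon_nil, map_one]
      exact grading_cast (by simp) (one_mem_grading gen dg)
    | cons g t ih =>
      rw [mon_cons, map_mul]
      match g with
      | Sum.inl g =>
        rw [he1]
        exact grading_cast (by rw [List.map_cons, List.sum_cons, (hddg g).1])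
          (grading_mul (hva g) ih)
      | Sum.inr (Sum.inl g) => rw [he2, zero_mul]; exact zero_mem _
      | Sum.inr (Sum.inr g) => rw [he3, zero_mul]; exact zero_mem _
  have e_grading : ∀ (n : ℤ) (z : DA), z ∈ grading K dgen ddg n → e z ∈ grading K gen dg n := by
    intro n z hz
    induction hz using Submodule.span_induction with
    | mem x hx =>
      obtain ⟨l, hsum, rfl⟩ := hx
      exact grading_cast (by rw [hsum]) (e_mon l)
    | zero => rw [map_zero]; exact zero_mem _
    | add x y hx hy ihx ihy => rw [map_add]; exact add_mem ihx ihy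
    | smul a x hx ihx => rw [map_smul]; exact Submodule.smul_mem _ _ ihx
  -- one values
  have hDone : D (1:DA) = 0 := der_one hDder
  have hsk1one : sk1 (1:DA) = 0 := der_one hsk1
  have hskone : sk (1:DA) = 0 := der_one hsk
  have hdAone : dA (1:A) = 0 := der_one hdA.1
  -- e kills sk1 (j a) and sk (j a)
  have esk1j : ∀ a : A, e (sk1 (j a)) = 0 := by
    have hmono : ∀ l : List G, e (sk1 (j (mon gen l))) = 0 := by
      intro l
      induction l with
      | nil => rw [mon_nil, map_one, hsk1one, map_zero]
      | cons g t ih =>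
        rw [mon_cons, map_mul, hj, hsk1.2 (dg g) _ _ (hv g), map_add, map_mul, map_smul,
          map_mul, hsk1a, he2, zero_mul, ih, mul_zero, smul_zero, add_zero]
    intro a
    have := lin_ext bA hbA (f := e.toLinearMap ∘ₗ (sk1 ∘ₗ j.toLinearMap)) (g := 0)
      (fun l => by simpa using hmono l) a
    simpa using this
  have eskj : ∀ a : A, e (sk (j a)) = 0 := by
    have hmono : ∀ l : List G, e (sk (j (mon gen l))) = 0 := by
      intro l
      induction l with
      | nil => rw [mon_nil, map_one, hskone, map_zero]
      | cons g t ih =>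
        rw [mon_cons, map_mul, hj, hsk.2 (dg g) _ _ (hv g), map_add, map_mul, map_smul,
          map_mul, hska, he3, zero_mul, ih, mul_zero, smul_zero, add_zero]
    intro a
    have := lin_ext bA hbA (f := e.toLinearMap ∘ₗ (sk ∘ₗ j.toLinearMap)) (g := 0)
      (fun l => by simpa using hmono l) a
    simpa using this
  -- commutation of D with sk1 ∘ j and sk ∘ j
  have hDv : ∀ g : G, D (dgen (Sum.inl g)) = j (dA (gen g)) := by
    intro g; rw [← hj, hD1]
  have hw1m : ∀ g : G, dgen (Sum.inr (Sum.inl g)) ∈ grading K dgen ddg (dg g - ((k:ℤ) - 1)) :=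
    fun g => grading_cast (by rw [(hddg g).2.1]) (gen_mem_grading dgen ddg _)
  have hw2m : ∀ g : G, dgen (Sum.inr (Sum.inr g)) ∈ grading K dgen ddg (dg g - (k:ℤ)) :=
    fun g => grading_cast (by rw [(hddg g).2.2]) (gen_mem_grading dgen ddg _)
  have L7a : ∀ a : A, D (sk1 (j a)) = ((-1:K) ^ ((k:ℤ) - 1)) • sk1 (j (dA a)) := by
    have hmono : ∀ l : List G, D (sk1 (j (mon gen l)))
        = ((-1:K) ^ ((k:ℤ) - 1)) • sk1 (j (dA (mon gen l))) := by
      intro l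
      induction l with
      | nil => rw [mon_nil, map_one, hsk1one, map_zero, hdAone, map_zero, map_zero, smul_zero]
      | cons g t ih =>
        rw [mon_cons, map_mul j (gen g) (mon gen t), hj]
        rw [hsk1.2 (dg g) _ _ (hv g), hsk1a]
        rw [map_add D, map_smul D, hDder.2 _ _ _ (hw1m g), hDder.2 (dg g) _ _ (hv g),
          hD2 g, hD1 (mon gen t), hDv g, ih]
        rw [hdA.1.2 (dg g) _ _ (hva g), map_add j, map_smul j,
          map_mul j (dA (gen g)) (mon gen t), map_mul j (gen g) (dA (mon gen t)), hj,
          map_add sk1, map_smul sk1, hsk1.2 (dg g + 1) _ _ (hjdAv g),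
          hsk1.2 (dg g) _ _ (hv g), hsk1a]
        simp only [smul_mul_assoc, mul_smul_comm, smul_add, smul_smul, hsn1]
        match_scalars
        · rfl
        · rw [mul_one, mul_one, s_mul]
          exact s_parity (K := K) ⟨1 - (k:ℤ), by ring⟩
        · rw [mul_one, mul_one, s_mul]
          exact s_parity (K := K) ⟨(0:ℤ), by ring⟩
        · rw [mul_one, mul_one, s_mul, s_mul, s_mul, s_mul]
          exact s_parity (K := K) ⟨(0:ℤ), by ring⟩
    intro a
    have := lin_ext bA hbA (f := D ∘ₗ (sk1 ∘ₗ j.toLinearMap))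
      (g := ((-1:K) ^ ((k:ℤ) - 1)) • (sk1 ∘ₗ (j.toLinearMap ∘ₗ dA)))
      (fun l => by simpa using hmono l) a
    simpa using this
  have L7b : ∀ a : A, D (sk (j a)) = sk1 (j a) + ((-1:K) ^ (k:ℤ)) • sk (j (dA a)) := by
    have hmono : ∀ l : List G, D (sk (j (mon gen l)))
        = sk1 (j (mon gen l)) + ((-1:K) ^ (k:ℤ)) • sk (j (dA (mon gen l))) := by
      intro l
      induction l with
      | nil =>
        rw [mon_nil, map_one, hskone, map_zero, hsk1one, hdAone, map_zero, map_zero,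
          smul_zero, add_zero]
      | cons g t ih =>
        rw [mon_cons, map_mul j (gen g) (mon gen t), hj]
        rw [hsk.2 (dg g) _ _ (hv g), hska]
        rw [map_add D, map_smul D, hDder.2 _ _ _ (hw2m g), hDder.2 (dg g) _ _ (hv g),
          hD3 g, hD1 (mon gen t), hDv g, ih]
        rw [hsk1.2 (dg g) _ _ (hv g), hsk1a]
        rw [hdA.1.2 (dg g) _ _ (hva g), map_add j, map_smul j,
          map_mul j (dA (gen g)) (mon gen t), map_mul j (gen g) (dA (mon gen t)), hj,
          map_add sk, map_smul sk, hsk.2 (dg g + 1) _ _ (hjdAv g),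
          hsk.2 (dg g) _ _ (hv g), hska]
        simp only [add_mul, mul_add, smul_mul_assoc, mul_smul_comm, smul_add, smul_smul, hsn2]
        match_scalars
        · rfl
        · rfl
        · rw [mul_one, mul_one, s_mul]
          exact s_parity (K := K) ⟨-(k:ℤ), by ring⟩
        · rw [mul_one, mul_one, s_mul]
          exact s_parity (K := K) ⟨(0:ℤ), by ring⟩
        · rw [mul_one, mul_one, s_mul]
          exact s_parity (K := K) ⟨(0:ℤ), by ring⟩
        · rw [mul_one, mul_one, s_mul, s_mul, s_mul, s_mul]
          exact s_parity (K := K) ⟨(0:ℤ), by ring⟩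
    intro a
    have := lin_ext bA hbA (f := D ∘ₗ (sk ∘ₗ j.toLinearMap))
      (g := (sk1 ∘ₗ j.toLinearMap) + ((-1:K) ^ (k:ℤ)) • (sk ∘ₗ (j.toLinearMap ∘ₗ dA)))
      (fun l => by simpa using hmono l) a
    simpa using this
  have hadd1 : ((-1:K) ^ ((k:ℤ) - 1)) + ((-1:K) ^ (k:ℤ)) = 0 := by
    rw [show (k:ℤ) = ((k:ℤ) - 1) + 1 by ring, zpow_add₀ (s_ne (K := K))]
    ring
  have DDgen : ∀ g : G ⊕ G ⊕ G, D (D (dgen g)) = 0 := by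
    intro g
    match g with
    | Sum.inl g => rw [← hj, hD1, hD1, hdA.2, map_zero]
    | Sum.inr (Sum.inl g) =>
      rw [hD2 g, map_smul, L7a, hdA.2, map_zero, map_zero, smul_zero, smul_zero]
    | Sum.inr (Sum.inr g) =>
      rw [hD3 g, map_add, map_smul, hD2 g, L7b, hdA.2, map_zero, map_zero, smul_zero,
        add_zero, hsn1, hsn2]
      rw [← add_smul, hadd1, zero_smul]
  have part1 : ∀ z : DA, D (D z) = 0 := by
    have hmono : ∀ l : List (G ⊕ G ⊕ G), D (D (mon dgen l)) = 0 := by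
      intro l
      induction l with
      | nil => rw [mon_nil, hDone, map_zero]
      | cons g t ih =>
        have hgm : dgen g ∈ grading K dgen ddg (ddg g) := gen_mem_grading dgen ddg g
        have hDg : D (dgen g) ∈ grading K dgen ddg (ddg g + 1) := hDder.1 _ _ hgm
        rw [mon_cons, hDder.2 (ddg g) _ _ hgm, map_add, map_smul,
          hDder.2 _ _ _ hDg, hDder.2 (ddg g) _ _ hgm, DDgen g, ih]
        simp only [zero_mul, mul_zero, smul_zero, add_zero, zero_add, smul_smul, smul_add]
        rw [← add_smul,
          show ((-1:K) ^ (1 * (ddg g + 1)) + (-1:K) ^ (1 * ddg g)) = 0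
          from by rw [one_mul, one_mul, zpow_add₀ (s_ne (K := K)), zpow_one]; ring,
          zero_smul]
    intro z
    have := lin_ext bD hbD (f := D ∘ₗ D) (g := 0) (fun l => by simpa using hmono l) z
    simpa using this
  have part2 : ∀ z : DA, dA (e z) = e (D z) := by
    have hmono : ∀ l : List (G ⊕ G ⊕ G), dA (e (mon dgen l)) = e (D (mon dgen l)) := by
      intro l
      induction l with
      | nil => rw [mon_nil, map_one, hdAone, hDone, map_zero]
      | cons g t ih =>
        match g with
        | Sum.inl g =>
          rw [mon_cons, map_mul e, he1, hdA.1.2 (dg g) _ _ (hva g), ih,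
            hDder.2 (dg g) _ _ (hv g), map_add e, map_mul e, map_smul e, map_mul e,
            hDv g, ej, he1, one_mul]
        | Sum.inr (Sum.inl g) =>
          rw [mon_cons, map_mul e, he2, zero_mul, map_zero,
            hDder.2 _ _ _ (hw1m g), map_add e, map_mul e, map_smul e, map_mul e, he2]
          simp [hD2 g, esk1j]
        | Sum.inr (Sum.inr g) =>
          rw [mon_cons, map_mul e, he3, zero_mul, map_zero,
            hDder.2 _ _ _ (hw2m g), map_add e, map_mul e, map_smul e, map_mul e, he3]
          simp [hD3 g, eskj, he2]
    intro z
    have := lin_ext bD hbD (f := dA ∘ₗ e.toLinearMap) (g := e.toLinearMap ∘ₗ D)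
      (fun l => by simpa using hmono l) z
    simpa using this
  refine ⟨part1, part2, ?_, ?_⟩
  · -- Part 3 : surjectivity on homology
    intro n a ha hda
    exact ⟨j a, j_grading n a ha, by rw [hD1, hda, map_zero], 0, zero_mem _,
      by rw [ej, sub_self, map_zero]⟩
  · -- Part 4 : injectivity on homology
    obtain ⟨tg, htg1, htg2, htg3⟩ :
        ∃ tg : G ⊕ G ⊕ G → DA, (∀ g, tg (Sum.inl g) = 0)
          ∧ (∀ g, tg (Sum.inr (Sum.inl g)) = dgen (Sum.inr (Sum.inr g)))
          ∧ (∀ g, tg (Sum.inr (Sum.inr g)) = 0) :=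
      ⟨Sum.elim (fun _ => 0) (Sum.elim (fun g => dgen (Sum.inr (Sum.inr g))) fun _ => 0),
        fun g => rfl, fun g => rfl, fun g => rfl⟩
    have htc : ∀ i j', tg i * dgen j' = ((-1:K) ^ ((ddg i - 1) * ddg j')) • (dgen j' * tg i) := by
      rintro (g | g | g) j'
      · rw [htg1]; simp
      · rw [htg2, show (ddg (Sum.inr (Sum.inl g)) - 1) * ddg j' = ddg (Sum.inr (Sum.inr g)) * ddg j'
          from by rw [(hddg g).2.1, (hddg g).2.2]; ring]
        exact hDcomm _ _
      · rw [htg3]; simp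
    have htm : ∀ g, tg g ∈ grading K dgen ddg (ddg g - 1) := by
      rintro (g | g | g)
      · rw [htg1]; exact zero_mem _
      · rw [htg2]
        exact grading_cast (show ddg (Sum.inr (Sum.inr g)) = ddg (Sum.inr (Sum.inl g)) - 1
          from by rw [(hddg g).2.1, (hddg g).2.2]; ring) (gen_mem_grading dgen ddg _)
      · rw [htg3]; exact zero_mem _
    set Th : DA →ₗ[K] DA := bD.constr K (fun s => tlist K dgen tg ddg s.1) with hThdef
    have hTmon : ∀ l, Th (mon dgen l) = tlist K dgen tg ddg l :=
      theta_mon bD hDcomm htc hbD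
    have hTmul : ∀ {i : ℤ} {x : DA}, x ∈ grading K dgen ddg i → ∀ y,
        Th (x * y) = Th x * y + ((-1:K) ^ i) • (x * Th y) :=
      fun hx y => theta_mul bD hDcomm htc hbD hx y
    have hTgrad : ∀ {n : ℤ} {x : DA}, x ∈ grading K dgen ddg n →
        Th x ∈ grading K dgen ddg (n - 1) :=
      fun hx => theta_grading bD hDcomm htc htm hbD hx
    have hTone : Th (1:DA) = 0 := by rw [← mon_nil dgen, hTmon, tlist_nil]
    have hTgen : ∀ g, Th (dgen g) = tg g := by
      intro g
      rw [← mon_single dgen, hTmon]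
      simp [tlist_cons, tlist_nil, mon_nil]
    have hTtg : ∀ g, Th (tg g) = 0 := by
      rintro (g | g | g)
      · rw [htg1, map_zero]
      · rw [htg2, hTgen, htg3]
      · rw [htg3, map_zero]
    -- Th vanishes on j(A)
    have θj : ∀ a : A, Th (j a) = 0 := by
      have hmono : ∀ l : List G, Th (j (mon gen l)) = 0 := by
        intro l
        induction l with
        | nil => rw [mon_nil, map_one, hTone]
        | cons g t ih =>
          rw [mon_cons, map_mul j, hj, hTmul (hv g) _, hTgen, htg1, zero_mul, ih,
            mul_zero, smul_zero, zero_add]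
      intro a
      have := lin_ext bA hbA (f := Th ∘ₗ j.toLinearMap) (g := 0)
        (fun l => by simpa using hmono l) a
      simpa using this
    -- Th ∘ sk1 = sk on j(A)
    have θsk1j : ∀ a : A, Th (sk1 (j a)) = sk (j a) := by
      have hmono : ∀ l : List G, Th (sk1 (j (mon gen l))) = sk (j (mon gen l)) := by
        intro l
        induction l with
        | nil => rw [mon_nil, map_one, hsk1one, map_zero, hskone]
        | cons g t ih =>
          rw [mon_cons, map_mul j, hj, hsk1.2 (dg g) _ _ (hv g), hsk1a,
            map_add Th, map_smul Th, hTmul (hw1m g) _, hTmul (hv g) _, hTgen, hTgen,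
            htg2, htg1, zero_mul, θj, mul_zero, smul_zero, add_zero, zero_add, ih,
            hsk.2 (dg g) _ _ (hv g), hska]
          simp only [smul_smul]
          match_scalars
          · rfl
          · rw [mul_one, mul_one, s_mul]
            exact s_parity (K := K) ⟨dg g, by ring⟩
      intro a
      have := lin_ext bA hbA (f := Th ∘ₗ (sk1 ∘ₗ j.toLinearMap))
        (g := sk ∘ₗ j.toLinearMap) (fun l => by simpa using hmono l) a
      simpa using this
    -- Th ∘ sk = 0 on j(A)
    have θskj : ∀ a : A, Th (sk (j a)) = 0 := by
      have hmono : ∀ l : List G, Th (sk (j (mon gen l))) = 0 := by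
        intro l
        induction l with
        | nil => rw [mon_nil, map_one, hskone, map_zero]
        | cons g t ih =>
          rw [mon_cons, map_mul j, hj, hsk.2 (dg g) _ _ (hv g), hska,
            map_add Th, map_smul Th, hTmul (hw2m g) _, hTmul (hv g) _, hTgen, hTgen,
            htg3, htg1, zero_mul, θj, mul_zero, smul_zero, add_zero, zero_add, zero_mul,
            zero_add, ih, mul_zero, smul_zero, smul_zero]
      intro a
      have := lin_ext bA hbA (f := Th ∘ₗ (sk ∘ₗ j.toLinearMap)) (g := 0)
        (fun l => by simpa using hmono l) a
      simpa using this
    -- Th ∘ Th = 0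
    have θθ : ∀ z : DA, Th (Th z) = 0 := by
      have hmono : ∀ l : List (G ⊕ G ⊕ G), Th (Th (mon dgen l)) = 0 := by
        intro l
        induction l with
        | nil => rw [mon_nil, hTone, map_zero]
        | cons g t ih =>
          rw [mon_cons, hTmul (gen_mem_grading dgen ddg g) _, hTgen,
            map_add Th, map_smul Th, hTmul (htm g) _, hTmul (gen_mem_grading dgen ddg g) _,
            hTtg, hTgen, ih, mul_zero, smul_zero, add_zero, zero_mul, zero_add]
          rw [← add_smul,
            show ((-1:K) ^ (ddg g - 1) + (-1:K) ^ (ddg g)) = 0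
            from by rw [show (ddg g : ℤ) = (ddg g - 1) + 1 by ring, zpow_add₀ (s_ne (K := K))]
                    ring,
            zero_smul]
      intro z
      have := lin_ext bD hbD (f := Th ∘ₗ Th) (g := 0)
        (fun l => by simpa using hmono l) z
      simpa using this
    obtain ⟨fib, hf1, hf2, hf3⟩ :
        ∃ fib : G ⊕ G ⊕ G → Bool, (∀ g, fib (Sum.inl g) = false)
          ∧ (∀ g, fib (Sum.inr (Sum.inl g)) = true) ∧ (∀ g, fib (Sum.inr (Sum.inr g)) = true) :=
      ⟨Sum.elim (fun _ => false) (fun _ => true), fun g => rfl, fun g => rfl, fun g => rfl⟩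
    have Egen : ∀ g : G ⊕ G ⊕ G, D (Th (dgen g)) + Th (D (dgen g))
        = (if fib g = true then (1:K) else 0) • dgen g := by
      rintro (g | g | g)
      · rw [hf1, hTgen, htg1, map_zero, hDv g, θj]
        simp
      · rw [hf2, hTgen, htg2, hD3 g, hD2 g, map_smul Th, θsk1j, hsn1, hsn2, add_assoc,
          ← add_smul, show ((-1:K) ^ ((k:ℤ)) + (-1:K) ^ ((k:ℤ) - 1)) = 0
            from by rw [add_comm]; exact hadd1,
          zero_smul, add_zero, if_pos rfl, one_smul]
      · rw [hf3, hTgen, htg3, map_zero, zero_add, hD3 g, map_add Th, map_smul Th, hTgen,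
          htg2, θskj, smul_zero, add_zero, if_pos rfl, one_smul]
    have F1 : ∀ l : List (G ⊕ G ⊕ G), D (Th (mon dgen l)) + Th (D (mon dgen l))
        = ((l.countP fib : K)) • mon dgen l := by
      intro l
      induction l with
      | nil => rw [mon_nil, hTone, map_zero, hDone, map_zero, add_zero]; simp
      | cons g t ih =>
        have hgm : dgen g ∈ grading K dgen ddg (ddg g) := gen_mem_grading dgen ddg g
        have ih' : Th (D (mon dgen t)) = ((t.countP fib : K)) • mon dgen t
            - D (Th (mon dgen t)) := eq_sub_of_add_eq' ih
        have hEg := Egen g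
        rw [hTgen] at hEg
        have hEg' : Th (D (dgen g)) = (if fib g = true then (1:K) else 0) • dgen g
            - D (tg g) := eq_sub_of_add_eq' hEg
        rw [mon_cons, hTmul hgm (mon dgen t), hDder.2 (ddg g) _ _ hgm, hTgen,
          map_add D, map_smul D, map_add Th, map_smul Th,
          hDder.2 _ _ _ (htm g), hDder.2 (ddg g) _ _ hgm,
          hTmul (hDder.1 _ _ hgm) (mon dgen t), hTmul hgm (D (mon dgen t)),
          hTgen, hEg', ih', List.countP_cons]
        push_cast
        simp only [sub_mul, smul_mul_assoc, mul_smul_comm, smul_add, smul_sub, smul_smul,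
          mul_sub, mul_add]
        match_scalars
        · ring
        · simp only [mul_one]
          rw [show (1 * ddg g - 1 : ℤ) = 1 * ddg g + (-1) by ring, zpow_add₀ (s_ne (K := K)),
            show ((-1:K) ^ (-1 : ℤ)) = -1 from by norm_num]
          ring
        · rw [mul_one, mul_one, zpow_add₀ (s_ne (K := K)), zpow_one]
          ring
        · ring
        · simp only [mul_one, one_mul]
          rw [← mul_assoc, s_mul,
            s_parity (K := K) (m := ddg g + ddg g) (n := 0) ⟨ddg g, by ring⟩]
          simp only [zpow_zero, one_mul]
          ring
    set Elin : DA →ₗ[K] DA := (D ∘ₗ Th) + (Th ∘ₗ D) with hElindef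
    have hElinapp : ∀ z : DA, Elin z = D (Th z) + Th (D z) := fun z => rfl
    have hEb : ∀ idx, Elin (bD idx) = ((idx.1.countP fib : K)) • bD idx := by
      intro idx
      rw [hElinapp, hbD]
      exact F1 idx.1
    have EDcomm : ∀ z : DA, Elin (D z) = D (Elin z) := by
      intro z
      rw [hElinapp, hElinapp, part1 z, map_zero, add_zero, map_add, part1 (Th z), zero_add]
    set R : DA →ₗ[K] DA := bD.constr K (fun idx => ((idx.1.countP fib : K))⁻¹ • bD idx)
      with hRdef
    set P : DA →ₗ[K] DA := bD.constr K (fun idx => if idx.1.countP fib = 0 then bD idx else 0)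
      with hPdef
    have coordE : ∀ (z : DA) idx, bD.repr (Elin z) idx
        = ((idx.1.countP fib : K)) * bD.repr z idx := by
      intro z idx
      have hmaps : (Finsupp.lapply idx ∘ₗ (bD.repr.toLinearMap ∘ₗ Elin))
          = ((idx.1.countP fib : K)) • (Finsupp.lapply idx ∘ₗ (bD.repr.toLinearMap : DA →ₗ[K] _)) := by
        apply bD.ext
        intro i
        simp only [LinearMap.comp_apply, Finsupp.lapply_apply, LinearMap.smul_apply,
          LinearEquiv.coe_toLinearMap, smul_eq_mul]
        rw [hEb i, map_smul, bD.repr_self, Finsupp.smul_apply, smul_eq_mul]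
        by_cases h : i = idx
        · subst h; rfl
        · rw [Finsupp.single_eq_of_ne (Ne.symm h)]; ring
      have := LinearMap.congr_fun hmaps z
      simpa using this
    have coordR : ∀ (z : DA) idx, bD.repr (R z) idx
        = ((idx.1.countP fib : K))⁻¹ * bD.repr z idx := by
      intro z idx
      have hmaps : (Finsupp.lapply idx ∘ₗ (bD.repr.toLinearMap ∘ₗ R))
          = ((idx.1.countP fib : K))⁻¹ • (Finsupp.lapply idx ∘ₗ (bD.repr.toLinearMap : DA →ₗ[K] _)) := by
        apply bD.ext
        intro i
        simp only [LinearMap.comp_apply, Finsupp.lapply_apply, LinearMap.smul_apply,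
          LinearEquiv.coe_toLinearMap, smul_eq_mul]
        rw [hRdef, Module.Basis.constr_basis, map_smul, bD.repr_self, Finsupp.smul_apply, smul_eq_mul]
        by_cases h : i = idx
        · subst h; rfl
        · rw [Finsupp.single_eq_of_ne (Ne.symm h)]; ring
      have := LinearMap.congr_fun hmaps z
      simpa using this
    have coordP : ∀ (z : DA) idx, bD.repr (P z) idx
        = if idx.1.countP fib = 0 then bD.repr z idx else 0 := by
      intro z idx
      have hmaps : (Finsupp.lapply idx ∘ₗ (bD.repr.toLinearMap ∘ₗ P))
          = (if idx.1.countP fib = 0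
              then (Finsupp.lapply idx ∘ₗ (bD.repr.toLinearMap : DA →ₗ[K] _)) else 0) := by
        apply bD.ext
        intro i
        simp only [LinearMap.comp_apply, Finsupp.lapply_apply]
        rw [hPdef, Module.Basis.constr_basis]
        by_cases h : i = idx
        · subst h
          by_cases hc : i.1.countP fib = 0
          · rw [if_pos hc, if_pos hc]; simp
          · rw [if_neg hc, if_neg hc]; simp
        · by_cases hc : i.1.countP fib = 0
          · rw [if_pos hc]
            by_cases hc' : idx.1.countP fib = 0
            · rw [if_pos hc']
              simp [LinearEquiv.coe_toLinearMap]
            · rw [if_neg hc']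
              simp [bD.repr_self, Finsupp.single_eq_of_ne (Ne.symm h)]
          · rw [if_neg hc]
            by_cases hc' : idx.1.countP fib = 0
            · rw [if_pos hc']
              simp [bD.repr_self, Finsupp.single_eq_of_ne (Ne.symm h)]
            · rw [if_neg hc']; simp
      have := LinearMap.congr_fun hmaps z
      by_cases hc' : idx.1.countP fib = 0
      · rw [if_pos hc']
        rw [if_pos hc'] at this
        simpa using this
      · rw [if_neg hc']
        rw [if_neg hc'] at this
        simpa using this
    have F2R : ∀ (p : ℕ) (z : DA), Elin z = (p:K) • z → R z = ((p:K))⁻¹ • z := by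
      intro p z h
      apply bD.repr.injective
      ext idx
      rw [coordR, map_smul, Finsupp.smul_apply, smul_eq_mul]
      by_cases h0 : bD.repr z idx = 0
      · rw [h0, mul_zero, mul_zero]
      · have hc : ((idx.1.countP fib : K)) = (p:K) := by
          have h2 := congrArg (fun w => bD.repr w idx) h
          rw [coordE, map_smul, Finsupp.smul_apply, smul_eq_mul] at h2
          exact mul_right_cancel₀ h0 h2
        rw [hc]
    have F2P : ∀ (p : ℕ) (z : DA), Elin z = (p:K) • z → P z = if p = 0 then z else 0 := by
      intro p z h
      apply bD.repr.injective
      ext idx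
      rw [coordP]
      by_cases h0 : bD.repr z idx = 0
      · split_ifs <;> simp [h0]
      · have hc : idx.1.countP fib = p := by
          have h2 := congrArg (fun w => bD.repr w idx) h
          rw [coordE, map_smul, Finsupp.smul_apply, smul_eq_mul] at h2
          exact Nat.cast_injective (mul_right_cancel₀ h0 h2)
        subst hc
        split_ifs with h1
        · rfl
        · simp
    have Rb : ∀ idx, R (bD idx) = ((idx.1.countP fib : K))⁻¹ • bD idx := by
      intro idx
      rw [hRdef, Module.Basis.constr_basis]
    have Pb : ∀ idx, P (bD idx) = if idx.1.countP fib = 0 then bD idx else 0 := by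
      intro idx
      rw [hPdef, Module.Basis.constr_basis]
    have RD : ∀ z : DA, R (D z) = D (R z) := by
      have hmaps : (R ∘ₗ D) = (D ∘ₗ R) := by
        apply bD.ext
        intro idx
        simp only [LinearMap.comp_apply]
        have h1 : Elin (D (bD idx)) = ((idx.1.countP fib : K)) • D (bD idx) := by
          rw [EDcomm, hEb, map_smul]
        rw [F2R _ _ h1, Rb, map_smul]
      exact fun z => LinearMap.congr_fun hmaps z
    have ERP : ∀ z : DA, Elin (R z) = z - P z := by
      have hmaps : (Elin ∘ₗ R) = (LinearMap.id - P) := by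
        apply bD.ext
        intro idx
        simp only [LinearMap.comp_apply, LinearMap.sub_apply, LinearMap.id_apply]
        rw [Rb, Pb, map_smul, hEb, smul_smul]
        by_cases hc : idx.1.countP fib = 0
        · rw [if_pos hc, hc]
          simp
        · rw [if_neg hc, inv_mul_cancel₀ (Nat.cast_ne_zero.mpr hc), one_smul, sub_zero]
      exact fun z => LinearMap.congr_fun hmaps z
    have allinl : ∀ l : List (G ⊕ G ⊕ G), l.countP fib = 0 → ∃ l' : List G, l = l'.map Sum.inl := by
      intro l
      induction l with
      | nil => exact fun _ => ⟨[], rfl⟩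
      | cons g t ih =>
        intro h
        rw [List.countP_cons] at h
        match g with
        | Sum.inl g =>
          obtain ⟨l', rfl⟩ := ih (by omega)
          exact ⟨g :: l', rfl⟩
        | Sum.inr (Sum.inl g) => rw [hf2] at h; simp at h
        | Sum.inr (Sum.inr g) => rw [hf3] at h; simp at h
    have Pj : ∀ z : DA, ∃ a : A, j a = P z := by
      have hb : ∀ idx, P (bD idx) ∈ LinearMap.range j.toLinearMap := by
        intro idx
        rw [Pb]
        split_ifs with hc
        · obtain ⟨l', hl'⟩ := allinl idx.1 hc
          rw [hbD, hl', ← jmon]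
          exact ⟨mon gen l', rfl⟩
        · exact zero_mem _
      intro z
      have hz : z ∈ Submodule.span K (Set.range bD) := by rw [bD.span_eq]; trivial
      have hmem : z ∈ Submodule.comap P (LinearMap.range j.toLinearMap) := by
        refine Submodule.span_le.mpr ?_ hz
        rintro _ ⟨idx, rfl⟩
        exact hb idx
      obtain ⟨a, ha⟩ := hmem
      exact ⟨a, ha⟩
    have Rgrading : ∀ {n : ℤ} {z : DA}, z ∈ grading K dgen ddg n →
        R z ∈ grading K dgen ddg n := by
      intro n z hz
      have h1 : z ∈ gradingB K dgen ddg n := grading_le_gradingB bD hDcomm htc hbD n hz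
      clear hz
      induction h1 using Submodule.span_induction with
      | mem x hx =>
        obtain ⟨l, hs, hr, hsum, rfl⟩ := hx
        rw [show mon dgen l = bD ⟨l, hs, hr⟩ from (hbD ⟨l, hs, hr⟩).symm, Rb]
        exact Submodule.smul_mem _ _
          (grading_cast hsum ((hbD ⟨l, hs, hr⟩) ▸ mon_mem_grading dgen ddg l))
      | zero => rw [map_zero]; exact zero_mem _
      | add x y hx hy ihx ihy => rw [map_add]; exact add_mem ihx ihy
      | smul a x hx ihx => rw [map_smul]; exact Submodule.smul_mem _ _ ihx
    -- final assembly
    intro n z hz hDz hex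
    obtain ⟨b₀, hb₀, heb⟩ := hex
    have hRz : R z ∈ grading K dgen ddg n := Rgrading hz
    have hw₁g : Th (R z) ∈ grading K dgen ddg (n - 1) := hTgrad hRz
    have hDw₁ : D (Th (R z)) = z - P z := by
      have h1 : Elin (R z) = z - P z := ERP z
      rw [hElinapp, ← RD z, hDz, map_zero, map_zero, add_zero] at h1
      exact h1
    obtain ⟨a₀, ha₀⟩ := Pj z
    have hea : e z = a₀ + dA (e (Th (R z))) := by
      have hzz : z = P z + D (Th (R z)) := by rw [hDw₁]; abel
      rw [show e z = e (P z + D (Th (R z))) from by rw [← hzz], map_add, ← ha₀, ej, ← part2]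
    have ha₀' : a₀ = dA (b₀ - e (Th (R z))) := by
      rw [map_sub, ← heb, hea]
      abel
    refine ⟨j (b₀ - e (Th (R z))) + Th (R z),
      add_mem (j_grading _ _ (sub_mem hb₀ (e_grading _ _ hw₁g))) hw₁g, ?_⟩
    rw [map_add, hD1, ← ha₀', ha₀, hDw₁]
    abel




end Brane
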